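/- Let $p \in (1,\infty)$ and set $p' = \frac{p}{p-1}$. Then for all real numbers $x > 0$ and $y \geq 0$: $x\,(y^{p-1} - x^{p-1}) \leq \frac{1}{p'}\,(y^{p} - x^{p}) - \frac{1}{\max\{p,p'\}}\,(y^{p/2} - x^{p/2})^{2}$. -/

import Mathlib

open Real

theorem lp_pointwise_inequality (p : ℝ) (hp : 1 < p) (p' : ℝ) (hp' : p' = p / (p - 1))
    (x y : ℝ) (hx : 0 < x) (hy : 0 ≤ y) :
    x * (y ^ (p - 1) - x ^ (p - 1)) ≤
      1 / p' * (y ^ p - x ^ p) - 1 / max p p' * (y ^ (p / 2) - x ^ (p / 2)) ^ 2 := by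
  have hp0 : 0 < p := by linarith
  have hp1 : (0:ℝ) < p - 1 := by linarith
  have hp'pos : 0 < p' := by rw [hp']; positivity
  set u := x ^ (p/2) with hu_def
  set v := y ^ (p/2) with hv_def
  have hu : 0 < u := rpow_pos_of_pos hx _
  have hv : 0 ≤ v := rpow_nonneg hy _
  have hxp : x ^ p = u ^ 2 := by
    rw [hu_def, ← rpow_natCast (x ^ (p/2)) 2, ← rpow_mul hx.le]
    norm_num
  have hyp : y ^ p = v ^ 2 := by
    rw [hv_def, ← rpow_natCast (y ^ (p/2)) 2, ← rpow_mul hy]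
    norm_num
  have hppinv : p / p' = p - 1 := by rw [hp']; field_simp
  have hxy : x * y ^ (p - 1) = u ^ (2/p) * v ^ (2/p') := by
    rw [hu_def, hv_def, ← rpow_mul hx.le, ← rpow_mul hy]
    have h1 : p/2 * (2/p) = 1 := by field_simp
    have h2 : p/2 * (2/p') = p - 1 := by rw [← hppinv]; ring
    rw [h1, h2, rpow_one]
  have hxx : x * x ^ (p - 1) = x ^ p := by
    nth_rewrite 1 [← rpow_one x]
    rw [← rpow_add hx]; ring_nf
  have hsum : 1/p + 1/p' = 1 := by
    rw [hp']; field_simp; ring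
  rw [mul_sub, hxy, hxx, hxp, hyp]
  rcases le_total p 2 with h2 | h2
  · have hple : p ≤ p' := by
      rw [hp', le_div_iff₀ hp1]; nlinarith
    rw [max_eq_right hple]
    have hw : 0 ≤ 1 - 2/p' := by
      have : 2/p' ≤ 1 := by
        rw [div_le_one hp'pos, hp', le_div_iff₀ hp1]; nlinarith
      linarith
    have amgm := Real.geom_mean_le_arith_mean2_weighted hw
      (by positivity : (0:ℝ) ≤ 2/p')
      (by positivity : (0:ℝ) ≤ u ^ 2) (mul_nonneg hu.le hv) (by ring)
    have hexp : (2:ℝ) * (1 - 2/p') + 2/p' = 2/p := by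
      have h1 : p ≠ 0 := ne_of_gt hp0
      have h2 : p' ≠ 0 := ne_of_gt hp'pos
      field_simp at hsum ⊢
      linarith [hsum]
    have hid : (u ^ 2) ^ (1 - 2/p') * (u * v) ^ (2/p') = u ^ (2/p) * v ^ (2/p') := by
      rw [mul_rpow hu.le hv, ← rpow_natCast u 2, ← rpow_mul hu.le]
      calc u ^ (((2:ℕ):ℝ) * (1 - 2/p')) * (u ^ (2/p') * v ^ (2/p'))
          = u ^ ((2:ℝ) * (1 - 2/p')) * u ^ (2/p') * v ^ (2/p') := by push_cast; ring
        _ = u ^ ((2:ℝ) * (1 - 2/p') + 2/p') * v ^ (2/p') := by rw [← rpow_add hu]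
        _ = u ^ (2/p) * v ^ (2/p') := by rw [hexp]
    have key : 1/p' * (v^2 - u^2) - 1/p' * (v - u)^2
        = (1 - 2/p') * u^2 + 2/p' * (u*v) - u^2 := by ring
    rw [hid] at amgm
    linarith [amgm, key]
  · have hple : p' ≤ p := by
      rw [hp', div_le_iff₀ hp1]; nlinarith
    rw [max_eq_left hple]
    have hw : 0 ≤ 1 - 2/p := by
      have : 2/p ≤ 1 := by rw [div_le_one hp0]; linarith
      linarith
    have amgm := Real.geom_mean_le_arith_mean2_weighted hw
      (by positivity : (0:ℝ) ≤ 2/p)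
      (by positivity : (0:ℝ) ≤ v ^ 2) (mul_nonneg hu.le hv) (by ring)
    have hexp : (2:ℝ) * (1 - 2/p) + 2/p = 2/p' := by
      have h1 : p ≠ 0 := ne_of_gt hp0
      have h2 : p' ≠ 0 := ne_of_gt hp'pos
      field_simp at hsum ⊢
      linarith [hsum]
    have hid : (v ^ 2) ^ (1 - 2/p) * (u * v) ^ (2/p) = u ^ (2/p) * v ^ (2/p') := by
      rw [mul_rpow hu.le hv, ← rpow_natCast v 2, ← rpow_mul hv]
      calc v ^ (((2:ℕ):ℝ) * (1 - 2/p)) * (u ^ (2/p) * v ^ (2/p))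
          = u ^ (2/p) * (v ^ ((2:ℝ) * (1 - 2/p)) * v ^ (2/p)) := by push_cast; ring
        _ = u ^ (2/p) * v ^ ((2:ℝ) * (1 - 2/p) + 2/p) := by
            rw [← Real.rpow_add' hv (by rw [hexp]; positivity)]
        _ = u ^ (2/p) * v ^ (2/p') := by rw [hexp]
    have key : 1/p' * (v^2 - u^2) - 1/p * (v - u)^2
        = (1 - 2/p) * v^2 + 2/p * (u*v) - u^2 := by
      linear_combination (v^2 - u^2) * hsum
    rw [hid] at amgm
    linarith [amgm, key]
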